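/- Let f : ℝ^d → ℝ be nonnegative, integrable, with ∫ f = 1, and suppose all sets Λⁿ ⊆ ℝ^d are uniformly discrete with a common separation constant δ₀ > 0. Let K ⊆ ℝ^d be compact. Then ∫_K ∑_{λ∈Λⁿ∖Q_n} f(x−λ) dx → 0 as n → ∞, where Q_n = [−n/2, n/2]^d. -/

import Mathlib

open MeasureTheory Filter Pointwise

noncomputable section

/-- The closed cube `[-R/2, R/2]^d`. -/
def cube (d : ℕ) (R : ℝ) : Set (Fin d → ℝ) := {y | ∀ i, |y i| ≤ R / 2}

/-- The open cube `(-ε/2, ε/2)^d`. -/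
def ocube (d : ℕ) (ε : ℝ) : Set (Fin d → ℝ) := {y | ∀ i, |y i| < ε / 2}

/-- `f + Λ` is a packing at level 1: `∑_{λ ∈ Λ} f(x - λ) ≤ 1` a.e. -/
def IsPacking {d : ℕ} (f : (Fin d → ℝ) → ℝ) (Λ : Set (Fin d → ℝ)) : Prop :=
  ∀ᵐ x : Fin d → ℝ, (∑' l : Λ, f (x - (l : Fin d → ℝ))) ≤ 1

/-- `Λ` is uniformly discrete with separation constant `δ`: distinct points are at
distance greater than `δ`. -/
def Separated {d : ℕ} (δ : ℝ) (Λ : Set (Fin d → ℝ)) : Prop :=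
  ∀ a ∈ Λ, ∀ b ∈ Λ, a ≠ b → δ < dist a b

/-- Weak convergence of the sets `Λⁿ` to `Λ`: for every `ε, R > 0`, eventually
`Λⁿ ∩ Q_R ⊆ Λ + Q_ε` and `Λ ∩ Q_R ⊆ Λⁿ + Q_ε`. -/
def WeakConv {d : ℕ} (Λn : ℕ → Set (Fin d → ℝ)) (Λ : Set (Fin d → ℝ)) : Prop :=
  ∀ ε > (0 : ℝ), ∀ R > (0 : ℝ), ∃ N : ℕ, ∀ n ≥ N,
    Λn n ∩ cube d R ⊆ Λ + ocube d ε ∧ Λ ∩ cube d R ⊆ Λn n + ocube d ε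

/-- The upper density of `Λ` is at least `c`: for every `ε > 0` there are arbitrarily
large `R` and a cube of side `R` containing at least `(c - ε) R^d` points of `Λ`. -/
def UpperDensGE {d : ℕ} (Λ : Set (Fin d → ℝ)) (c : ℝ) : Prop :=
  ∀ ε > (0 : ℝ), ∀ R₀ : ℝ, ∃ R > R₀, ∃ x : Fin d → ℝ,
    (((Λ ∩ {y | ∀ i, |y i - x i| ≤ R / 2}).ncard : ℝ)) ≥ (c - ε) * R ^ d

open scoped ENNReal NNReal Topology

lemma Separated.countable {d : ℕ} {δ : ℝ} (hδ : 0 < δ) {Λ : Set (Fin d → ℝ)}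
    (h : Separated δ Λ) : Λ.Countable := by
  apply Set.PairwiseDisjoint.countable_of_isOpen
    (s := fun a : Fin d → ℝ => Metric.ball a (δ / 2))
  · intro a ha b hb hab
    exact Metric.ball_disjoint_ball (by linarith [h a ha b hb hab])
  · exact fun a _ => Metric.isOpen_ball
  · exact fun a _ => Metric.nonempty_ball.2 (by linarith)

theorem tail_lemma {d : ℕ} (f : (Fin d → ℝ) → ℝ)
    (hf0 : ∀ x, 0 ≤ f x) (hfi : Integrable f) (hint : ∫ x, f x = 1)
    (Λn : ℕ → Set (Fin d → ℝ)) (δ₀ : ℝ) (hδ₀ : 0 < δ₀)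
    (hsepn : ∀ n, Separated δ₀ (Λn n))
    (K : Set (Fin d → ℝ)) (hK : IsCompact K) :
    Tendsto (fun n : ℕ =>
        ∫ x in K, ∑' l : ↥(Λn n \ cube d (n : ℝ)), f (x - (l : Fin d → ℝ)))
      atTop (nhds 0) := by
  classical
  obtain ⟨r, hKr⟩ := hK.isBounded.subset_closedBall 0
  set h : (Fin d → ℝ) → ℝ≥0∞ := fun y => ENNReal.ofReal (f y) with hh
  have hm : AEMeasurable h volume := ENNReal.measurable_ofReal.comp_aemeasurable hfi.aemeasurable
  set v : ℝ≥0∞ := volume (Metric.ball (0 : Fin d → ℝ) (δ₀ / 2)) with hv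
  set V : ℝ≥0∞ := volume (Metric.closedBall (0 : Fin d → ℝ) (r + δ₀ / 2)) with hV
  have hv0 : v ≠ 0 := (Metric.measure_ball_pos _ _ (by linarith)).ne'
  have hvt : v ≠ ∞ := measure_ball_lt_top.ne
  have hVt : V ≠ ∞ := measure_closedBall_lt_top.ne
  set C : ℝ≥0∞ := V / v with hC
  have hCt : C ≠ ∞ := (ENNReal.div_lt_top hVt hv0).ne
  set ν : Measure (Fin d → ℝ) := volume.withDensity h with hν
  haveI : IsFiniteMeasure ν := by
    constructor
    rw [hν, withDensity_apply _ MeasurableSet.univ, Measure.restrict_univ]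
    exact hfi.lintegral_lt_top
  set T : ℕ → Set (Fin d → ℝ) := fun n => {y | (n : ℝ) / 2 - r ≤ ‖y‖} with hT
  have hTmeas : ∀ n, MeasurableSet (T n) :=
    fun n => (isClosed_le continuous_const continuous_norm).measurableSet
  -- the key lintegral bound
  set I : ℕ → ℝ≥0∞ := fun n =>
    ∫⁻ x in K, ∑' l : ↥(Λn n \ cube d (n : ℝ)), h (x - (l : Fin d → ℝ)) with hI
  have key : ∀ n, I n ≤ C * ν (T n) := by
    intro n
    set Λ' : Set (Fin d → ℝ) := Λn n \ cube d (n : ℝ) with hΛ'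
    have hΛ'sub : Λ' ⊆ Λn n := Set.diff_subset
    have hcnt : Λ'.Countable := ((hsepn n).countable hδ₀).mono hΛ'sub
    haveI : Countable ↥Λ' := hcnt.to_subtype
    set A : ↥Λ' → Set (Fin d → ℝ) := fun l => (· + (l : Fin d → ℝ)) ⁻¹' K with hA
    have hAmeas : ∀ l, MeasurableSet (A l) :=
      fun l => hK.isClosed.measurableSet.preimage (measurable_add_const _)
    have hAT : ∀ l, A l ⊆ T n := by
      rintro ⟨l, hlΛ, hlc⟩ y (hy : y + l ∈ K)
      simp only [cube, Set.mem_setOf_eq, not_forall] at hlc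
      obtain ⟨i, hi⟩ := hlc
      have h1 : ‖y + l‖ ≤ r := mem_closedBall_zero_iff.1 (hKr hy)
      have h2 : (n : ℝ) / 2 ≤ ‖l‖ := by
        have := norm_le_pi_norm l i
        simp only [Real.norm_eq_abs] at this
        linarith [not_le.1 hi]
      have h3 : ‖l‖ ≤ ‖y + l‖ + ‖y‖ := by
        calc ‖l‖ = ‖(y + l) - y‖ := by ring_nf
        _ ≤ ‖y + l‖ + ‖y‖ := norm_sub_le _ _
      simp only [T, Set.mem_setOf_eq]
      linarith
    -- step 1: swap sum and integral, translate
    have step1 : I n = ∫⁻ y, ∑' l : ↥Λ', (A l).indicator h y := by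
      have e1 : (∫⁻ x in K, ∑' l : ↥Λ', h (x - (l : Fin d → ℝ))) =
          ∑' l : ↥Λ', ∫⁻ x in K, h (x - (l : Fin d → ℝ)) := by
        refine lintegral_tsum fun l => ?_
        exact (hm.comp_quasiMeasurePreserving
          (measurePreserving_sub_right volume (l : Fin d → ℝ)).quasiMeasurePreserving).restrict
      have e2 : ∀ l : ↥Λ', (∫⁻ x in K, h (x - (l : Fin d → ℝ)))
          = ∫⁻ y, (A l).indicator h y := by
        intro l
        rw [← lintegral_indicator hK.isClosed.measurableSet]
        have : ∀ x, K.indicator (fun x => h (x - (l : Fin d → ℝ))) x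
            = (A l).indicator h (x - (l : Fin d → ℝ)) := by
          intro x
          by_cases hx : x ∈ K
          · rw [Set.indicator_of_mem hx, Set.indicator_of_mem]
            show x - l + l ∈ K
            simpa using hx
          · rw [Set.indicator_of_notMem hx, Set.indicator_of_notMem]
            intro hx'
            rw [hA] at hx'
            apply hx
            simpa using hx'
        simp_rw [this]
        exact lintegral_sub_right_eq_self ((A l).indicator h) (l : Fin d → ℝ)
      calc I n = ∑' l : ↥Λ', ∫⁻ x in K, h (x - (l : Fin d → ℝ)) := e1
        _ = ∑' l : ↥Λ', ∫⁻ y, (A l).indicator h y := by simp_rw [e2]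
        _ = ∫⁻ y, ∑' l : ↥Λ', (A l).indicator h y :=
            (lintegral_tsum fun l => hm.indicator (hAmeas l)).symm
    -- step 2: pointwise multiplicity bound
    have step2 : ∀ y, (∑' l : ↥Λ', (A l).indicator h y) ≤ C * (T n).indicator h y := by
      intro y
      by_cases hey : ∃ l : ↥Λ', y ∈ A l
      · obtain ⟨l₀, hl₀⟩ := hey
        have hyT : y ∈ T n := hAT l₀ hl₀
        rw [Set.indicator_of_mem hyT]
        have expand : ∀ l : ↥Λ', (A l).indicator h y
            = (A l).indicator (fun _ => (1 : ℝ≥0∞)) y * h y := by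
          intro l
          by_cases hyl : y ∈ A l <;> simp [Set.indicator_of_mem, Set.indicator_of_notMem, hyl]
        simp_rw [expand, ENNReal.tsum_mul_right]
        refine mul_le_mul_left ?_ (h y)
        -- multiplicity ≤ C via volume packing
        rw [hC, ENNReal.le_div_iff_mul_le (Or.inl hv0) (Or.inl hvt)]
        set B : Set (Fin d → ℝ) := Metric.closedBall (-y) (r + δ₀ / 2) with hB
        have perterm : ∀ l : ↥Λ', (A l).indicator (fun _ => (1 : ℝ≥0∞)) y * v
            ≤ volume (Metric.ball (l : Fin d → ℝ) (δ₀ / 2) ∩ B) := by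
          rintro ⟨l, hl⟩
          by_cases hyl : y ∈ A ⟨l, hl⟩
          · rw [Set.indicator_of_mem hyl, one_mul]
            have hsub : Metric.ball l (δ₀ / 2) ⊆ B := by
              intro z hz
              have h1 : ‖y + l‖ ≤ r := mem_closedBall_zero_iff.1 (hKr hyl)
              have h2 : dist z l < δ₀ / 2 := hz
              have h3 : dist l (-y) ≤ r := by
                rw [dist_eq_norm]
                simpa [add_comm] using h1
              calc dist z (-y) ≤ dist z l + dist l (-y) := dist_triangle _ _ _
              _ ≤ r + δ₀ / 2 := by linarith
            rw [Set.inter_eq_left.2 hsub, Measure.addHaar_ball_center]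
          · rw [Set.indicator_of_notMem hyl, zero_mul]
            exact zero_le
        calc (∑' l : ↥Λ', (A l).indicator (fun _ => (1 : ℝ≥0∞)) y) * v
            = ∑' l : ↥Λ', (A l).indicator (fun _ => (1 : ℝ≥0∞)) y * v :=
              ENNReal.tsum_mul_right.symm
          _ ≤ ∑' l : ↥Λ', volume (Metric.ball (l : Fin d → ℝ) (δ₀ / 2) ∩ B) :=
              ENNReal.tsum_le_tsum perterm
          _ = volume (⋃ l : ↥Λ', Metric.ball (l : Fin d → ℝ) (δ₀ / 2) ∩ B) := by
              refine (measure_iUnion ?_ fun l =>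
                Metric.isOpen_ball.measurableSet.inter measurableSet_closedBall).symm
              intro l₁ l₂ hne
              refine Disjoint.mono Set.inter_subset_left Set.inter_subset_left ?_
              refine Metric.ball_disjoint_ball ?_
              have hps : ((l₁ : Fin d → ℝ)) ≠ ((l₂ : Fin d → ℝ)) :=
                fun hval => hne (Subtype.ext hval)
              have := hsepn n _ (hΛ'sub l₁.2) _ (hΛ'sub l₂.2) hps
              linarith
          _ ≤ volume B := measure_mono (Set.iUnion_subset fun l => Set.inter_subset_right)
          _ = V := by rw [hB, Measure.addHaar_closedBall_center]
      · push_neg at hey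
        have : ∀ l : ↥Λ', (A l).indicator h y = 0 :=
          fun l => Set.indicator_of_notMem (hey l) h
        simp [this]
    -- combine
    calc I n = ∫⁻ y, ∑' l : ↥Λ', (A l).indicator h y := step1
      _ ≤ ∫⁻ y, C * (T n).indicator h y := lintegral_mono step2
      _ = C * ∫⁻ y, (T n).indicator h y := lintegral_const_mul' _ _ hCt
      _ = C * ν (T n) := by
          rw [lintegral_indicator (hTmeas n), hν, withDensity_apply _ (hTmeas n)]
  have hνT_ne : ∀ n, ν (T n) ≠ ∞ := fun n => measure_ne_top ν _
  have hCνT_ne : ∀ n, C * ν (T n) ≠ ∞ := fun n => ENNReal.mul_ne_top hCt (hνT_ne n)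
  have hIne : ∀ n, I n ≠ ∞ := fun n => ((key n).trans_lt (hCνT_ne n).lt_top).ne
  -- tail measure tends to zero
  have htail : Tendsto (fun n => ν (T n)) atTop (𝓝 0) := by
    have hant : Antitone T := by
      intro a b hab y hy
      simp only [T, Set.mem_setOf_eq] at hy ⊢
      have : (a : ℝ) ≤ b := Nat.cast_le.2 hab
      linarith
    have hint : (⋂ n, T n) = ∅ := by
      ext y
      simp only [Set.mem_iInter, Set.mem_empty_iff_false, iff_false, not_forall]
      obtain ⟨n, hn⟩ := exists_nat_gt (2 * (‖y‖ + r))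
      refine ⟨n, ?_⟩
      simp only [T, Set.mem_setOf_eq, not_le]
      linarith
    have := tendsto_measure_iInter_atTop (μ := ν)
      (fun n => (hTmeas n).nullMeasurableSet) hant ⟨0, hνT_ne 0⟩
    rw [hint] at this
    simpa [Function.comp_def] using this
  -- squeeze
  have hbound : Tendsto (fun n => (C * ν (T n)).toReal) atTop (𝓝 0) := by
    have h1 : Tendsto (fun n => C * ν (T n)) atTop (𝓝 (C * 0)) :=
      ENNReal.Tendsto.const_mul htail (Or.inr hCt)
    rw [mul_zero] at h1
    have h2 := (ENNReal.tendsto_toReal (by simp : (0 : ℝ≥0∞) ≠ ∞)).comp h1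
    rw [ENNReal.toReal_zero] at h2
    exact h2
  refine squeeze_zero (fun n => integral_nonneg fun x => tsum_nonneg fun l => hf0 _)
    (fun n => ?_) hbound
  -- the integral is bounded by (C * ν (T n)).toReal
  have hle : (∫ x in K, ∑' l : ↥(Λn n \ cube d (n : ℝ)), f (x - (l : Fin d → ℝ)))
      ≤ (I n).toReal := by
    by_cases hmeas : AEStronglyMeasurable
        (fun x => ∑' l : ↥(Λn n \ cube d (n : ℝ)), f (x - (l : Fin d → ℝ)))
        (volume.restrict K)
    · rw [integral_eq_lintegral_of_nonneg_ae
        (Filter.Eventually.of_forall fun x => tsum_nonneg fun l => hf0 _) hmeas]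
      refine ENNReal.toReal_mono (hIne n) (lintegral_mono fun x => ?_)
      by_cases hsum : Summable (fun l : ↥(Λn n \ cube d (n : ℝ)) => f (x - (l : Fin d → ℝ)))
      · rw [ENNReal.ofReal_tsum_of_nonneg (fun l => hf0 _) hsum]
      · rw [tsum_eq_zero_of_not_summable hsum]
        simp
    · rw [integral_non_aestronglyMeasurable hmeas]
      exact ENNReal.toReal_nonneg
  exact hle.trans (ENNReal.toReal_mono (hCνT_ne n) (key n))
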